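/- Let A be a 3×3 real orthogonal matrix with det A = 1, let t : Fin 3 → ℝ, let c ∈ ZMod 8, and let x : ZMod 8 → (Fin 3 → ℝ). Define y by y i = A.mulVec (x (c - i)) + t. Then the torsion data sequence of y satisfies σ(y) i = σ(x) (c - 1 - i) for every i ∈ ZMod 8. (Hence a reversal of the vertex labeling, combined with any orientation-preserving rigid motion, acts on torsion angle sequences by reversing their order.) -/

import Mathlib

open Matrix

/-- The torsion data of a quadruple `(a, b, c, d)` of points in `ℝ³`. -/
def torsionData (a b c d : Fin 3 → ℝ) : ℝ × ℝ :=
  let e₁ := b - a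
  let e₂ := c - b
  let e₃ := d - c
  let m₁ := e₁ ⨯₃ e₂
  let m₂ := e₂ ⨯₃ e₃
  (m₁ ⬝ᵥ m₂, (m₁ ⨯₃ m₂) ⬝ᵥ e₂)

/-- The torsion data sequence of a map `x : ZMod 8 → (Fin 3 → ℝ)`. -/
def torsionSeq (x : ZMod 8 → Fin 3 → ℝ) (i : ZMod 8) : ℝ × ℝ :=
  torsionData (x (i - 1)) (x i) (x (i + 1)) (x (i + 2))

lemma adj_eq (A : Matrix (Fin 3) (Fin 3) ℝ) (hA : Aᵀ * A = 1) (hdet : A.det = 1) :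
    A.adjugate = Aᵀ := by
  have h : A * A.adjugate = 1 := by rw [Matrix.mul_adjugate, hdet, one_smul]
  calc A.adjugate = 1 * A.adjugate := (one_mul _).symm
    _ = Aᵀ * A * A.adjugate := by rw [hA]
    _ = Aᵀ * (A * A.adjugate) := by rw [Matrix.mul_assoc]
    _ = Aᵀ := by rw [h, Matrix.mul_one]

lemma cross_mulVec (A : Matrix (Fin 3) (Fin 3) ℝ) (hA : Aᵀ * A = 1) (hdet : A.det = 1)
    (u v : Fin 3 → ℝ) : (A.mulVec u) ⨯₃ (A.mulVec v) = A.mulVec (u ⨯₃ v) := by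
  have h : (A.adjugate)ᵀ = A := by rw [adj_eq A hA hdet, transpose_transpose]
  have key : (A.mulVec u) ⨯₃ (A.mulVec v) = (A.adjugate)ᵀ.mulVec (u ⨯₃ v) := by
    ext i
    fin_cases i <;>
      simp [cross_apply, mulVec, dotProduct, Fin.sum_univ_three, adjugate_fin_three,
        transpose_apply] <;> ring
  rw [key, h]

lemma dot_mulVec (A : Matrix (Fin 3) (Fin 3) ℝ) (hA : Aᵀ * A = 1)
    (u v : Fin 3 → ℝ) : (A.mulVec u) ⬝ᵥ (A.mulVec v) = u ⬝ᵥ v := by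
  rw [Matrix.dotProduct_mulVec, ← Matrix.mulVec_transpose, Matrix.mulVec_mulVec, hA,
    Matrix.one_mulVec]

lemma cross_rev1 (p q r s : Fin 3 → ℝ) :
    ((r - s) ⨯₃ (q - r)) ⬝ᵥ ((q - r) ⨯₃ (p - q)) =
      ((q - p) ⨯₃ (r - q)) ⬝ᵥ ((r - q) ⨯₃ (s - r)) := by
  simp only [cross_apply, dotProduct, Fin.sum_univ_three, Pi.sub_apply,
    Matrix.cons_val_zero, Matrix.cons_val_one, Matrix.head_cons,
    Matrix.cons_val_two, Matrix.tail_cons]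
  ring

lemma cross_rev2 (p q r s : Fin 3 → ℝ) :
    ((((r - s) ⨯₃ (q - r)) ⨯₃ ((q - r) ⨯₃ (p - q))) ⬝ᵥ (q - r)) =
      ((((q - p) ⨯₃ (r - q)) ⨯₃ ((r - q) ⨯₃ (s - r))) ⬝ᵥ (r - q)) := by
  simp only [cross_apply, dotProduct, Fin.sum_univ_three, Pi.sub_apply,
    Matrix.cons_val_zero, Matrix.cons_val_one, Matrix.head_cons,
    Matrix.cons_val_two, Matrix.tail_cons]
  ring

lemma torsionData_rev (A : Matrix (Fin 3) (Fin 3) ℝ) (hA : Aᵀ * A = 1) (hdet : A.det = 1)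
    (t : Fin 3 → ℝ) (p q r s : Fin 3 → ℝ) :
    torsionData (A.mulVec s + t) (A.mulVec r + t) (A.mulVec q + t) (A.mulVec p + t) =
      torsionData p q r s := by
  have he : ∀ u v : Fin 3 → ℝ, (A.mulVec u + t) - (A.mulVec v + t) = A.mulVec (u - v) := by
    intro u v
    rw [add_sub_add_right_eq_sub, ← Matrix.mulVec_sub]
  unfold torsionData
  simp only [he, cross_mulVec A hA hdet, dot_mulVec A hA]
  exact Prod.ext (cross_rev1 p q r s) (cross_rev2 p q r s)

theorem torsionSeq_of_reversal
    (A : Matrix (Fin 3) (Fin 3) ℝ) (hA : Aᵀ * A = 1) (hdet : A.det = 1)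
    (t : Fin 3 → ℝ) (c : ZMod 8) (x : ZMod 8 → Fin 3 → ℝ) :
    ∀ i : ZMod 8, torsionSeq (fun j => A.mulVec (x (c - j)) + t) i = torsionSeq x (c - 1 - i) := by
  intro i
  have h1 : c - (i - 1) = (c - 1 - i) + 2 := by ring
  have h2 : c - i = (c - 1 - i) + 1 := by ring
  have h3 : c - (i + 1) = c - 1 - i := by ring
  have h4 : c - (i + 2) = (c - 1 - i) - 1 := by ring
  simp only [torsionSeq, h1, h2, h3, h4]
  exact torsionData_rev A hA hdet t (x ((c - 1 - i) - 1)) (x (c - 1 - i))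
    (x ((c - 1 - i) + 1)) (x ((c - 1 - i) + 2))
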